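/- arXiv:1511.07086 — 2 statements merged into one kernel-verified Lean document; each statement's English description precedes it below -/
import Mathlib

section
/- Let n ∈ ℕ, let x, p : ℝ × ℝⁿ → ℝⁿ be continuously differentiable maps, let H₁ : ℝⁿ × ℝⁿ → ℝ be continuously differentiable, and let tᵢ : ℝⁿ → ℝ be differentiable at q̄, such that H₁(x(tᵢ(q), q), p(tᵢ(q), q)) = 0 for all q in a neighborhood of q̄. Let Ḣ₁ denote the derivative of t ↦ H₁(x(t, q̄), p(t, q̄)) at t = tᵢ(q̄), and suppose Ḣ₁ ≠ 0. Then the derivative of tᵢ at q̄ is given by Dtᵢ(q̄) = −(∂H₁/∂x · ∂x/∂q + ∂H₁/∂p · ∂p/∂q)/Ḣ₁, where ∂x/∂q and ∂p/∂q are the partial derivatives of x and p in q evaluated at (tᵢ(q̄), q̄), and ∂H₁/∂x, ∂H₁/∂p are the partial gradients of H₁ evaluated at (x(tᵢ(q̄), q̄), p(tᵢ(q̄), q̄)). -/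
/-- Sensitivity of switching times to the parameter of a family of extremals:
differentiating the identity `H₁(x(tᵢ(q), q), p(tᵢ(q), q)) = 0` at a regular switching
point (`Ḣ₁ ≠ 0`) yields
`Dtᵢ(qbar) = −(∂H₁/∂x ∘ ∂x/∂q + ∂H₁/∂p ∘ ∂p/∂q)/Ḣ₁`. -/
theorem switching_time_sensitivity (n : ℕ)
    (x p : ℝ × (Fin n → ℝ) → (Fin n → ℝ))
    (H₁ : (Fin n → ℝ) × (Fin n → ℝ) → ℝ)
    (tᵢ : (Fin n → ℝ) → ℝ) (qbar : Fin n → ℝ)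
    (hx : ContDiff ℝ 1 x) (hp : ContDiff ℝ 1 p) (hH : ContDiff ℝ 1 H₁)
    (ht : DifferentiableAt ℝ tᵢ qbar)
    (hzero : ∀ᶠ q in nhds qbar, H₁ (x (tᵢ q, q), p (tᵢ q, q)) = 0)
    (Hdot : ℝ)
    (hHdot : HasDerivAt (fun t => H₁ (x (t, qbar), p (t, qbar))) Hdot (tᵢ qbar))
    (hHdot0 : Hdot ≠ 0) :
    fderiv ℝ tᵢ qbar =
      (-Hdot⁻¹) •
        ((fderiv ℝ (fun ξ => H₁ (ξ, p (tᵢ qbar, qbar))) (x (tᵢ qbar, qbar))).comp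
            (fderiv ℝ (fun q => x (tᵢ qbar, q)) qbar) +
          (fderiv ℝ (fun π => H₁ (x (tᵢ qbar, qbar), π)) (p (tᵢ qbar, qbar))).comp
            (fderiv ℝ (fun q => p (tᵢ qbar, q)) qbar)) := by
  classical
  have hxd : Differentiable ℝ x := hx.differentiable one_ne_zero
  have hpd : Differentiable ℝ p := hp.differentiable one_ne_zero
  have hHd : Differentiable ℝ H₁ := hH.differentiable one_ne_zero
  set T := tᵢ qbar with hT
  set a := x (T, qbar) with ha
  set b := p (T, qbar) with hb
  set C := fderiv ℝ H₁ (a, b) with hC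
  set X := fderiv ℝ x (T, qbar) with hX
  set P := fderiv ℝ p (T, qbar) with hP
  set A := C.comp (X.prod P) with hA
  set D := fderiv ℝ tᵢ qbar with hD
  -- derivative of the inner pair map
  have hpair : HasFDerivAt (fun z : ℝ × (Fin n → ℝ) => (x z, p z)) (X.prod P) (T, qbar) :=
    HasFDerivAt.prodMk (hxd (T, qbar)).hasFDerivAt (hpd (T, qbar)).hasFDerivAt
  -- full derivative of G := fun z => H₁ (x z, p z) at (T, qbar)
  have hG : HasFDerivAt (fun z : ℝ × (Fin n → ℝ) => H₁ (x z, p z)) A (T, qbar) :=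
    (hHd (a, b)).hasFDerivAt.comp (T, qbar) hpair
  -- derivative of q ↦ (tᵢ q, q)
  have hφ : HasFDerivAt (fun q : Fin n → ℝ => ((tᵢ q : ℝ), q))
      (D.prod (ContinuousLinearMap.id ℝ (Fin n → ℝ))) qbar :=
    HasFDerivAt.prodMk ht.hasFDerivAt (hasFDerivAt_id qbar)
  -- chain rule on the identity
  have hcomp : HasFDerivAt (fun q => H₁ (x (tᵢ q, q), p (tᵢ q, q)))
      (A.comp (D.prod (ContinuousLinearMap.id ℝ (Fin n → ℝ)))) qbar :=
    HasFDerivAt.comp (f := fun q => ((tᵢ q : ℝ), q)) qbar hG hφ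
  have hzero' : HasFDerivAt (fun _ : Fin n → ℝ => (0 : ℝ))
      (A.comp (D.prod (ContinuousLinearMap.id ℝ (Fin n → ℝ)))) qbar :=
    hcomp.congr_of_eventuallyEq (hzero.mono fun q hq => hq.symm)
  have hkey : A.comp (D.prod (ContinuousLinearMap.id ℝ (Fin n → ℝ))) = 0 :=
    hzero'.unique (hasFDerivAt_const 0 qbar)
  -- Hdot equals A (1, 0)
  have hAt : HasDerivAt (fun t => H₁ (x (t, qbar), p (t, qbar)))
      ((A.comp (ContinuousLinearMap.inl ℝ ℝ (Fin n → ℝ))) 1) T :=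
    (HasFDerivAt.comp (f := fun t : ℝ => (t, qbar)) T hG (hasFDerivAt_prodMk_left T qbar)).hasDerivAt
  have hHdotA : Hdot = A (1, 0) := by
    have := hHdot.unique hAt
    simpa using this
  -- partial derivatives of x and p in q
  have hXq : fderiv ℝ (fun q => x (T, q)) qbar
      = X.comp (ContinuousLinearMap.inr ℝ ℝ (Fin n → ℝ)) :=
    ((hxd (T, qbar)).hasFDerivAt.comp qbar (hasFDerivAt_prodMk_right T qbar)).fderiv
  have hPq : fderiv ℝ (fun q => p (T, q)) qbar
      = P.comp (ContinuousLinearMap.inr ℝ ℝ (Fin n → ℝ)) :=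
    ((hpd (T, qbar)).hasFDerivAt.comp qbar (hasFDerivAt_prodMk_right T qbar)).fderiv
  -- partial derivatives of H₁
  have hC1 : fderiv ℝ (fun ξ => H₁ (ξ, b)) a
      = C.comp (ContinuousLinearMap.inl ℝ (Fin n → ℝ) (Fin n → ℝ)) :=
    ((hHd (a, b)).hasFDerivAt.comp a (hasFDerivAt_prodMk_left a b)).fderiv
  have hC2 : fderiv ℝ (fun π => H₁ (a, π)) b
      = C.comp (ContinuousLinearMap.inr ℝ (Fin n → ℝ) (Fin n → ℝ)) :=
    ((hHd (a, b)).hasFDerivAt.comp b (hasFDerivAt_prodMk_right a b)).fderiv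
  rw [hXq, hPq, hC1, hC2]
  ext v
  have h0 : A (D v, v) = 0 := by
    have := congrArg (fun (L : (Fin n → ℝ) →L[ℝ] ℝ) => L v) hkey
    simpa using this
  have hsplit : A (D v, v) = D v * Hdot + A (0, v) := by
    have h1 : ((D v, v) : ℝ × (Fin n → ℝ)) = (D v) • ((1 : ℝ), (0 : Fin n → ℝ)) + (0, v) := by
      simp
    rw [h1, map_add, map_smul, hHdotA]
    simp only [smul_eq_mul]
  have hDv : D v = -Hdot⁻¹ * A (0, v) := by
    have : D v * Hdot + A (0, v) = 0 := by rw [← hsplit]; exact h0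
    field_simp
    linarith
  have hAv : A (0, v) = C (X (0, v), 0) + C (0, P (0, v)) := by
    have : (X (0, v), P (0, v)) = ((X (0, v), (0 : Fin n → ℝ)) : (Fin n → ℝ) × (Fin n → ℝ)) + (0, P (0, v)) := by simp
    simp only [hA, ContinuousLinearMap.comp_apply, ContinuousLinearMap.prod_apply, this, map_add]
  simp only [ContinuousLinearMap.smul_apply, ContinuousLinearMap.add_apply,
    ContinuousLinearMap.comp_apply, ContinuousLinearMap.inl_apply,
    ContinuousLinearMap.inr_apply]
  rw [hDv, hAv]
  simp [smul_eq_mul, mul_add]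
end

section
/- Let n ∈ ℕ. Let X⁺ be an invertible n×n real matrix, P⁺ an n×n real matrix, and set S⁺ := P⁺ (X⁺)⁻¹. Let f, g ∈ ℝⁿ be column vectors, w a 1×n row vector, Δ ∈ ℝ, and set R := w (X⁺)⁻¹. Define X⁻ := X⁺ + Δ f w and P⁻ := P⁺ − Δ g w. If 1 + Δ·(R f) ≠ 0, then X⁻ is invertible and P⁻ (X⁻)⁻¹ = (S⁺ − Δ g R) · (I − Δ (f R)/(1 + Δ · R f)), where f R and g R denote n×n outer products and I is the identity matrix. -/
open scoped Matrix

lemma vecMulVec_mul_aux {n : ℕ} (u v : Fin n → ℝ) (M : Matrix (Fin n) (Fin n) ℝ) :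
    Matrix.vecMulVec u v * M = Matrix.vecMulVec u (Matrix.vecMul v M) := by
  ext i j
  simp [Matrix.mul_apply, Matrix.vecMulVec_apply, Matrix.vecMul, dotProduct,
    Finset.mul_sum, mul_assoc]

lemma vecMulVec_mul_vecMulVec_aux {n : ℕ} (u v a b : Fin n → ℝ) :
    Matrix.vecMulVec u v * Matrix.vecMulVec a b =
      (v ⬝ᵥ a) • Matrix.vecMulVec u b := by
  ext i j
  simp only [Matrix.mul_apply, Matrix.vecMulVec_apply, Matrix.smul_apply, dotProduct,
    smul_eq_mul, Finset.sum_mul, Finset.mul_sum]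
  exact Finset.sum_congr rfl fun k _ => by ring

/-- Jump formula for the gain matrix `S = P X⁻¹` at a switching time of a bang-bang
extremal: with `X⁻ = X⁺ + Δ f w`, `P⁻ = P⁺ − Δ g w`, `R = w (X⁺)⁻¹` and
`1 + Δ (R f) ≠ 0`, the matrix `X⁻` is invertible and
`P⁻ (X⁻)⁻¹ = (S⁺ − Δ g R) (I − Δ (f R)/(1 + Δ R f))`. -/
theorem gain_matrix_jump_formula (n : ℕ) (Xp : Matrix (Fin n) (Fin n) ℝ)
    (hX : IsUnit Xp.det) (Pp : Matrix (Fin n) (Fin n) ℝ)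
    (f g w : Fin n → ℝ) (Δ : ℝ)
    (h : 1 + Δ * (Matrix.vecMul w Xp⁻¹ ⬝ᵥ f) ≠ 0) :
    IsUnit (Xp + Δ • Matrix.vecMulVec f w).det ∧
    (Pp - Δ • Matrix.vecMulVec g w) * (Xp + Δ • Matrix.vecMulVec f w)⁻¹ =
      (Pp * Xp⁻¹ - Δ • Matrix.vecMulVec g (Matrix.vecMul w Xp⁻¹)) *
        (1 - (Δ / (1 + Δ * (Matrix.vecMul w Xp⁻¹ ⬝ᵥ f))) •
          Matrix.vecMulVec f (Matrix.vecMul w Xp⁻¹)) := by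
  set R := Matrix.vecMul w Xp⁻¹ with hR
  set c := 1 + Δ * (R ⬝ᵥ f) with hc
  set A := Matrix.vecMulVec f R with hA
  set M := (1 : Matrix (Fin n) (Fin n) ℝ) + Δ • A with hM
  set N := (1 : Matrix (Fin n) (Fin n) ℝ) - (Δ / c) • A with hN
  have hAA : A * A = (R ⬝ᵥ f) • A := vecMulVec_mul_vecMulVec_aux f R f R
  have expand : ∀ s t : ℝ, ((1 : Matrix (Fin n) (Fin n) ℝ) + s • A) * (1 - t • A) =
      1 + (s - t - s * t * (R ⬝ᵥ f)) • A := by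
    intro s t
    simp only [mul_sub, sub_mul, mul_add, add_mul, one_mul, mul_one, Matrix.smul_mul,
      Matrix.mul_smul, hAA, smul_smul]
    module
  have expand2 : ∀ s t : ℝ, ((1 : Matrix (Fin n) (Fin n) ℝ) - t • A) * (1 + s • A) =
      1 + (s - t - s * t * (R ⬝ᵥ f)) • A := by
    intro s t
    simp only [mul_sub, sub_mul, mul_add, add_mul, one_mul, mul_one, Matrix.smul_mul,
      Matrix.mul_smul, hAA, smul_smul]
    module
  have hzero : Δ - Δ / c - Δ * (Δ / c) * (R ⬝ᵥ f) = 0 := by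
    field_simp
    ring
  have hNM : N * M = 1 := by
    rw [hN, hM, expand2, hzero, zero_smul, add_zero]
  have hMN : M * N = 1 := by
    rw [hM, hN, expand, hzero, zero_smul, add_zero]
  have hXinv : Xp⁻¹ * Xp = 1 := Matrix.nonsing_inv_mul Xp hX
  have hdecomp : Xp + Δ • Matrix.vecMulVec f w = M * Xp := by
    rw [hM, add_mul, one_mul, Matrix.smul_mul, hA, vecMulVec_mul_aux, hR,
      Matrix.vecMul_vecMul, hXinv, Matrix.vecMul_one]
  have hMdet : IsUnit M.det := Matrix.isUnit_det_of_left_inverse hNM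
  refine ⟨by rw [hdecomp, Matrix.det_mul]; exact hMdet.mul hX, ?_⟩
  rw [hdecomp, Matrix.mul_inv_rev]
  have hMinv : M⁻¹ = N := Matrix.inv_eq_left_inv hNM
  rw [hMinv, ← mul_assoc, sub_mul, Matrix.smul_mul, vecMulVec_mul_aux, ← hR]
end
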